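/- arXiv:2110.10313 — 2 statements merged into one kernel-verified Lean document; each statement's English description precedes it below -/
import Mathlib

section
/- Let f = (f₁,…,f_s) ∈ ℚ[x]^s with V(f) smooth (Jacobian of rank s everywhere on V(f)), V(f) ∩ ℝⁿ bounded, and g ∈ ℚ[x]. If C is a connected component of (V(f) \ V(g)) ∩ ℝⁿ, then g attains a nonzero extreme value at some point of C, and that point is a critical point of g on V(f). -/
open Finset Matrix MvPolynomial

theorem mv_hasStrictFDerivAt {n : ℕ} (p : MvPolynomial (Fin n) ℝ) (x : Fin n → ℝ) :
    HasStrictFDerivAt (fun y => eval y p)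
      (∑ i : Fin n, eval x (pderiv i p) • (ContinuousLinearMap.proj i : (Fin n → ℝ) →L[ℝ] ℝ)) x := by
  induction p using MvPolynomial.induction_on with
  | C a =>
      simp only [eval_C, pderiv_C, map_zero, zero_smul, Finset.sum_const_zero]
      exact hasStrictFDerivAt_const a x
  | add p q hp hq =>
      simp only [map_add, add_smul, Finset.sum_add_distrib]
      exact hp.add hq
  | mul_X p i hp =>
      have h1 : HasStrictFDerivAt (fun y : Fin n → ℝ => y i)
          (ContinuousLinearMap.proj i : (Fin n → ℝ) →L[ℝ] ℝ) x :=
        (ContinuousLinearMap.proj (R := ℝ) (φ := fun _ : Fin n => ℝ) i).hasStrictFDerivAt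
      have H : HasStrictFDerivAt (fun y : Fin n → ℝ => eval y p * y i)
          (eval x p • (ContinuousLinearMap.proj i : (Fin n → ℝ) →L[ℝ] ℝ) +
            x i • ∑ i : Fin n, eval x (pderiv i p) •
              (ContinuousLinearMap.proj i : (Fin n → ℝ) →L[ℝ] ℝ)) x := hp.mul h1
      simp only [eval_mul, eval_X]
      convert H using 1
      ext v
      simp only [pderiv_mul, pderiv_X, map_add, eval_mul, eval_X,
        ContinuousLinearMap.sum_apply, ContinuousLinearMap.smul_apply,
        ContinuousLinearMap.proj_apply, ContinuousLinearMap.add_apply, smul_eq_mul,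
        add_mul, Finset.sum_add_distrib]
      rw [add_comm]
      congr 1
      · rw [Finset.sum_eq_single i]
        · simp
        · intro j _ hj
          simp [Pi.single_apply, hj]
        · simp
      · rw [Finset.mul_sum]
        exact Finset.sum_congr rfl fun j _ => by ring

theorem clm_sum_proj_apply {n : ℕ} (c : Fin n → ℝ) (i : Fin n) :
    (∑ k : Fin n, c k • (ContinuousLinearMap.proj k : (Fin n → ℝ) →L[ℝ] ℝ)) (Pi.single i 1)
      = c i := by
  simp only [ContinuousLinearMap.sum_apply, ContinuousLinearMap.smul_apply,
    ContinuousLinearMap.proj_apply, smul_eq_mul]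
  rw [Finset.sum_eq_single i]
  · simp
  · intro j _ hj
    simp [Pi.single_apply, hj]
  · simp

theorem eval_compat {n : ℕ} (p : MvPolynomial (Fin n) ℚ) (x : Fin n → ℝ) :
    eval (fun i => (x i : ℂ)) (MvPolynomial.map (algebraMap ℚ ℂ) p)
      = ((eval x (MvPolynomial.map (algebraMap ℚ ℝ) p) : ℝ) : ℂ) := by
  have hcomp : (Complex.ofRealHom).comp (algebraMap ℚ ℝ) = algebraMap ℚ ℂ :=
    Subsingleton.elim _ _
  rw [← hcomp, ← MvPolynomial.map_map, eval_map]
  have h2 := MvPolynomial.eval₂_comp_left Complex.ofRealHom (RingHom.id ℝ) x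
    (MvPolynomial.map (algebraMap ℚ ℝ) p)
  simp only [RingHom.comp_id] at h2
  rw [show eval x (MvPolynomial.map (algebraMap ℚ ℝ) p)
      = eval₂ (RingHom.id ℝ) x (MvPolynomial.map (algebraMap ℚ ℝ) p) from rfl]
  exact (h2.symm.trans (by rfl))

theorem inj_of_rank {K : Type*} [Field K] {s n : ℕ} (A : Matrix (Fin s) (Fin n) K)
    (h : A.rank = s) : Function.Injective (Aᵀ.mulVecLin) := by
  have hAt : Aᵀ.rank = s := by rw [Matrix.rank_transpose]; exact h
  rw [← LinearMap.ker_eq_bot]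
  have hrn := Aᵀ.mulVecLin.finrank_range_add_finrank_ker
  rw [Matrix.rank] at hAt
  have hz : Module.finrank K (LinearMap.ker Aᵀ.mulVecLin) = 0 := by
    have hd : Module.finrank K (Fin s → K) = s := by simp
    omega
  exact Submodule.finrank_eq_zero.mp hz

theorem rank_real_of_rank_complex {s n : ℕ} (A : Matrix (Fin s) (Fin n) ℝ)
    (h : (A.map (algebraMap ℝ ℂ)).rank = s) : A.rank = s := by
  have hinj : Function.Injective ((A.map (algebraMap ℝ ℂ))ᵀ.mulVecLin) := inj_of_rank _ h
  have hrowind : Function.Injective (Aᵀ.mulVecLin) := by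
    rw [← LinearMap.ker_eq_bot, LinearMap.ker_eq_bot']
    intro v hv
    have hv' : (A.map (algebraMap ℝ ℂ))ᵀ.mulVecLin (fun j => (v j : ℂ)) = 0 := by
      funext i
      have := congrFun hv i
      simp only [Matrix.mulVecLin_apply, Matrix.mulVec, dotProduct,
        Matrix.transpose_apply, Matrix.map_apply, Pi.zero_apply] at this ⊢
      rw [← Complex.ofReal_zero, ← this]
      push_cast
      rfl
    have hv0 : (fun j => (v j : ℂ)) = 0 := hinj (by simpa using hv')
    funext j
    have := congrFun hv0 j
    simp only [Pi.zero_apply] at this ⊢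
    exact_mod_cast this
  have hAt : Aᵀ.rank = s := by
    rw [Matrix.rank, LinearMap.finrank_range_of_inj hrowind]; simp
  rw [← Matrix.rank_transpose]; exact hAt

theorem local_connected_level_set {n s : ℕ}
    {F : (Fin n → ℝ) → (Fin s → ℝ)} {F' : (Fin n → ℝ) →L[ℝ] (Fin s → ℝ)} {a : Fin n → ℝ}
    (hF : HasStrictFDerivAt F F' a) (hsurj : LinearMap.range (F' : (Fin n → ℝ) →ₗ[ℝ] (Fin s → ℝ)) = ⊤) (ha : F a = 0)
    {W : Set (Fin n → ℝ)} (hW : IsOpen W) (haW : a ∈ W) :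
    ∃ U : Set (Fin n → ℝ), IsOpen U ∧ a ∈ U ∧ U ⊆ W ∧
      IsPreconnected ({x | F x = 0} ∩ U) := by
  set e := hF.implicitToOpenPartialHomeomorph F F' hsurj with he
  have hasrc : a ∈ e.source := hF.mem_implicitToOpenPartialHomeomorph_source hsurj
  have hea : e a = (0, 0) := by
    rw [he, HasStrictFDerivAt.implicitToOpenPartialHomeomorph_self, ha]
  have hcont : ContinuousOn e.symm e.target := e.continuousOn_symm
  have htarget : IsOpen e.target := e.open_target
  have hmem : e a ∈ e.target := e.map_source hasrc
  have h1 : e.target ∩ e.symm ⁻¹' W ∈ nhds (e a) := by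
    apply Filter.inter_mem (htarget.mem_nhds hmem)
    have hca : ContinuousAt e.symm (e a) := hcont.continuousAt (htarget.mem_nhds hmem)
    apply hca.preimage_mem_nhds
    rw [e.left_inv hasrc]
    exact hW.mem_nhds haW
  obtain ⟨ε, hε, hball⟩ := Metric.mem_nhds_iff.mp h1
  set B := Metric.ball (e a) ε with hB
  refine ⟨e.source ∩ e ⁻¹' B, e.isOpen_inter_preimage Metric.isOpen_ball,
    ⟨hasrc, Metric.mem_ball_self hε⟩, ?_, ?_⟩
  · rintro x ⟨hx, hxB⟩
    have hW2 : e x ∈ e.target ∩ e.symm ⁻¹' W := hball hxB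
    have := hW2.2
    rwa [Set.mem_preimage, e.left_inv hx] at this
  · have key : {x | F x = 0} ∩ (e.source ∩ e ⁻¹' B)
        = e.symm '' (B ∩ {p | p.1 = 0}) := by
      ext x
      constructor
      · rintro ⟨hFx, hx, hxB⟩
        refine ⟨e x, ⟨hxB, ?_⟩, e.left_inv hx⟩
        show (e x).1 = 0
        rw [he, HasStrictFDerivAt.implicitToOpenPartialHomeomorph_fst]
        exact hFx
      · rintro ⟨p, ⟨hpB, hp1⟩, rfl⟩
        have hpt : p ∈ e.target := (hball hpB).1
        have hsource : e.symm p ∈ e.source := e.map_target hpt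
        have hep : e (e.symm p) = p := e.right_inv hpt
        refine ⟨?_, hsource, ?_⟩
        · show F (e.symm p) = 0
          have h3 : (e (e.symm p)).1 = F (e.symm p) := by
            rw [he]; exact HasStrictFDerivAt.implicitToOpenPartialHomeomorph_fst hF hsurj _
          rw [hep] at h3
          rw [← h3]; exact hp1
        · show e (e.symm p) ∈ B
          rw [hep]; exact hpB
    rw [key]
    apply IsPreconnected.image
    · apply Convex.isPreconnected
      apply (convex_ball _ _).inter
      have hker : {p : (Fin s → ℝ) × (LinearMap.ker (F' : (Fin n → ℝ) →ₗ[ℝ] (Fin s → ℝ))) | p.1 = 0}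
          = LinearMap.ker (LinearMap.fst ℝ (Fin s → ℝ) (LinearMap.ker (F' : (Fin n → ℝ) →ₗ[ℝ] (Fin s → ℝ)))) := by
        ext p; simp [LinearMap.mem_ker]
      rw [hker]
      exact (LinearMap.ker _).convex
    · exact hcont.mono (fun p hp => (hball hp.1).1)

set_option maxHeartbeats 1000000 in
theorem rank_from_extremum {n s : ℕ}
    (f : Fin s → MvPolynomial (Fin n) ℚ) (g : MvPolynomial (Fin n) ℚ) (xstar : Fin n → ℝ)
    (hrankA : (Matrix.of fun (j : Fin s) (i : Fin n) =>
        MvPolynomial.eval xstar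
          (MvPolynomial.map (algebraMap ℚ ℝ) (MvPolynomial.pderiv i (f j)))).rank = s)
    (hloc : IsLocalExtrOn (fun x => MvPolynomial.eval x (MvPolynomial.map (algebraMap ℚ ℝ) g))
      {x | ∀ j, MvPolynomial.eval x (MvPolynomial.map (algebraMap ℚ ℝ) (f j)) =
        MvPolynomial.eval xstar (MvPolynomial.map (algebraMap ℚ ℝ) (f j))} xstar) :
    (Matrix.fromRows
        (Matrix.of fun (j : Fin s) (i : Fin n) =>
          MvPolynomial.eval xstar
            (MvPolynomial.map (algebraMap ℚ ℝ) (MvPolynomial.pderiv i (f j))))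
        (Matrix.of fun (_ : Unit) (i : Fin n) =>
          MvPolynomial.eval xstar
            (MvPolynomial.map (algebraMap ℚ ℝ) (MvPolynomial.pderiv i g)))).rank = s := by
  set A : Matrix (Fin s) (Fin n) ℝ := Matrix.of fun j i =>
    MvPolynomial.eval xstar (MvPolynomial.map (algebraMap ℚ ℝ) (MvPolynomial.pderiv i (f j)))
    with hA
  set Gr : Fin n → ℝ := fun i =>
    MvPolynomial.eval xstar (MvPolynomial.map (algebraMap ℚ ℝ) (MvPolynomial.pderiv i g))
    with hGr
  have hf' : ∀ j, HasStrictFDerivAt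
      (fun x => MvPolynomial.eval x (MvPolynomial.map (algebraMap ℚ ℝ) (f j)))
      (∑ i : Fin n, A j i • (ContinuousLinearMap.proj i : (Fin n → ℝ) →L[ℝ] ℝ)) xstar := by
    intro j
    have h := mv_hasStrictFDerivAt (MvPolynomial.map (algebraMap ℚ ℝ) (f j)) xstar
    simp only [pderiv_map] at h
    exact h
  have hg' : HasStrictFDerivAt
      (fun x => MvPolynomial.eval x (MvPolynomial.map (algebraMap ℚ ℝ) g))
      (∑ i : Fin n, Gr i • (ContinuousLinearMap.proj i : (Fin n → ℝ) →L[ℝ] ℝ)) xstar := by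
    have h := mv_hasStrictFDerivAt (MvPolynomial.map (algebraMap ℚ ℝ) g) xstar
    simp only [pderiv_map] at h
    exact h
  obtain ⟨Λ, Λ₀, h0, hsum⟩ := hloc.exists_multipliers_of_hasStrictFDerivAt hf' hg'
  have heval : ∀ i : Fin n, (∑ j, Λ j * A j i) + Λ₀ * Gr i = 0 := by
    intro i
    have h := congrArg (fun (L : (Fin n → ℝ) →L[ℝ] ℝ) => L (Pi.single i 1)) hsum
    simp only [ContinuousLinearMap.add_apply, ContinuousLinearMap.sum_apply,
      ContinuousLinearMap.smul_apply, ContinuousLinearMap.zero_apply, smul_eq_mul,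
      ContinuousLinearMap.proj_apply, Pi.single_apply, mul_ite, mul_one, mul_zero,
      Finset.sum_ite_eq', Finset.mem_univ, if_true] at h
    exact h
  by_cases hL0 : Λ₀ = 0
  · -- contradiction with linear independence of rows of A
    exfalso
    have hLne : Λ ≠ 0 := by
      intro hL
      exact h0 (by simp [hL, hL0, Prod.ext_iff])
    have hinj := inj_of_rank A hrankA
    apply hLne
    have h1 : Aᵀ.mulVecLin Λ = 0 := by
      funext i
      have h2 := heval i
      rw [hL0, zero_mul, add_zero] at h2
      simp only [Matrix.mulVecLin_apply, Matrix.mulVec, dotProduct,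
        Matrix.transpose_apply, Pi.zero_apply]
      rw [← h2]
      exact Finset.sum_congr rfl fun j _ => mul_comm _ _
    have := hinj (a₂ := 0) (by simpa using h1)
    exact this
  · -- Gr is in the row span of A
    have hGspan : Gr = ∑ j, (-(Λ j / Λ₀)) • A j := by
      funext i
      have h2 := heval i
      rw [Finset.sum_apply]
      have h3 : ∑ j, ((-(Λ j / Λ₀)) • A j) i = (-(∑ j, Λ j * A j i)) / Λ₀ := by
        simp only [Pi.smul_apply, smul_eq_mul]
        rw [← Finset.sum_neg_distrib, Finset.sum_div]
        exact Finset.sum_congr rfl fun j _ => by ring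
      rw [h3]
      field_simp
      linarith
    have hGmem : Gr ∈ Submodule.span ℝ (Set.range A) := by
      rw [hGspan]
      exact Submodule.sum_mem _ fun j _ =>
        Submodule.smul_mem _ _ (Submodule.subset_span ⟨j, rfl⟩)
    -- compute rank via row span
    rw [Matrix.rank_eq_finrank_span_row]
    have hrange : Set.range (Matrix.fromRows A (Matrix.of fun (_ : Unit) i => Gr i))
        = Set.range A ∪ {Gr} := by
      have : (Matrix.fromRows A (Matrix.of fun (_ : Unit) i => Gr i))
          = Sum.elim A (fun _ : Unit => Gr) := by
        funext u i
        cases u with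
        | inl j => rfl
        | inr u => rfl
      rw [this]
      refine (Set.Sum.elim_range _ _).trans ?_
      congr 1
      exact Set.range_const
    rw [show (Matrix.fromRows A (Matrix.of fun (_ : Unit) i => Gr i)).row
        = (Matrix.fromRows A (Matrix.of fun (_ : Unit) i => Gr i)) from rfl]
    rw [hrange, Set.union_comm, ← Set.insert_eq, Submodule.span_insert_eq_span hGmem]
    rw [← show Set.range A.row = Set.range A from rfl, ← Matrix.rank_eq_finrank_span_row]
    exact hrankA


set_option maxHeartbeats 1000000 in
/-- On a smooth variety `V(f)` with bounded real part, on every connected component `C` of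
`(V(f) \ V(g)) ∩ ℝⁿ` the polynomial `g` attains a nonzero extreme value at some point of
`C`, and that point is a critical point of `g` on `V(f)` (the Jacobian of `f` augmented
with `∇g` has rank `s` there). -/
theorem extreme_value_at_critical_point
    (n s : ℕ) (hs : s ≤ n)
    (f : Fin s → MvPolynomial (Fin n) ℚ) (g : MvPolynomial (Fin n) ℚ)
    -- smoothness: the Jacobian has full rank s at every complex point of V(f)
    (hreg : ∀ x : Fin n → ℂ,
      (∀ j, MvPolynomial.eval x (MvPolynomial.map (algebraMap ℚ ℂ) (f j)) = 0) →
      (Matrix.of fun (j : Fin s) (i : Fin n) =>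
        MvPolynomial.eval x
          (MvPolynomial.map (algebraMap ℚ ℂ) (MvPolynomial.pderiv i (f j)))).rank = s)
    -- the real variety is bounded
    (hbdd : Bornology.IsBounded
      {x : Fin n → ℝ | ∀ j, MvPolynomial.eval x (MvPolynomial.map (algebraMap ℚ ℝ) (f j)) = 0})
    (C : Set (Fin n → ℝ)) (x₀ : Fin n → ℝ)
    (hx₀ : x₀ ∈ {x : Fin n → ℝ |
      (∀ j, MvPolynomial.eval x (MvPolynomial.map (algebraMap ℚ ℝ) (f j)) = 0) ∧
      MvPolynomial.eval x (MvPolynomial.map (algebraMap ℚ ℝ) g) ≠ 0})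
    (hC : C = connectedComponentIn
      {x : Fin n → ℝ |
        (∀ j, MvPolynomial.eval x (MvPolynomial.map (algebraMap ℚ ℝ) (f j)) = 0) ∧
        MvPolynomial.eval x (MvPolynomial.map (algebraMap ℚ ℝ) g) ≠ 0} x₀) :
    ∃ xstar ∈ C,
      MvPolynomial.eval xstar (MvPolynomial.map (algebraMap ℚ ℝ) g) ≠ 0 ∧
      ((∀ y ∈ C, MvPolynomial.eval y (MvPolynomial.map (algebraMap ℚ ℝ) g) ≤
          MvPolynomial.eval xstar (MvPolynomial.map (algebraMap ℚ ℝ) g)) ∨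
        (∀ y ∈ C, MvPolynomial.eval xstar (MvPolynomial.map (algebraMap ℚ ℝ) g) ≤
          MvPolynomial.eval y (MvPolynomial.map (algebraMap ℚ ℝ) g))) ∧
      (Matrix.fromRows
        (Matrix.of fun (j : Fin s) (i : Fin n) =>
          MvPolynomial.eval xstar
            (MvPolynomial.map (algebraMap ℚ ℝ) (MvPolynomial.pderiv i (f j))))
        (Matrix.of fun (_ : Unit) (i : Fin n) =>
          MvPolynomial.eval xstar
            (MvPolynomial.map (algebraMap ℚ ℝ) (MvPolynomial.pderiv i g)))).rank = s := by
  classical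
  set S : Set (Fin n → ℝ) := {x : Fin n → ℝ |
      (∀ j, MvPolynomial.eval x (MvPolynomial.map (algebraMap ℚ ℝ) (f j)) = 0) ∧
      MvPolynomial.eval x (MvPolynomial.map (algebraMap ℚ ℝ) g) ≠ 0} with hSdef
  set Vr : Set (Fin n → ℝ) :=
    {x : Fin n → ℝ | ∀ j, MvPolynomial.eval x (MvPolynomial.map (algebraMap ℚ ℝ) (f j)) = 0}
    with hVrdef
  have hgc : Continuous (fun x : Fin n → ℝ =>
      MvPolynomial.eval x (MvPolynomial.map (algebraMap ℚ ℝ) g)) :=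
    continuous_iff_continuousAt.2 fun x => (mv_hasStrictFDerivAt _ x).continuousAt
  have hfc : ∀ j, Continuous (fun x : Fin n → ℝ =>
      MvPolynomial.eval x (MvPolynomial.map (algebraMap ℚ ℝ) (f j))) :=
    fun j => continuous_iff_continuousAt.2 fun x => (mv_hasStrictFDerivAt _ x).continuousAt
  have hVclosed : IsClosed Vr := by
    have hrw : Vr = ⋂ j, (fun x : Fin n → ℝ =>
        MvPolynomial.eval x (MvPolynomial.map (algebraMap ℚ ℝ) (f j))) ⁻¹' {0} := by
      ext x; simp [hVrdef]
    rw [hrw]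
    exact isClosed_iInter fun j => isClosed_singleton.preimage (hfc j)
  have hSsub : S ⊆ Vr := fun x hx => hx.1
  have hx₀C : x₀ ∈ C := hC ▸ mem_connectedComponentIn hx₀
  have hCS : C ⊆ S := hC ▸ connectedComponentIn_subset _ _
  have hCVr : C ⊆ Vr := fun x hx => (hCS hx).1
  have hKb : Bornology.IsBounded (closure C) := hbdd.subset (closure_minimal hCVr hVclosed)
  have hKcomp : IsCompact (closure C) :=
    Metric.isCompact_of_isClosed_isBounded isClosed_closure hKb
  have hKV : closure C ⊆ Vr := closure_minimal hCVr hVclosed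
  have hCpre : IsPreconnected C := hC ▸ isPreconnected_connectedComponentIn
  have hbd : ∀ y ∈ closure C, y ∉ C →
      MvPolynomial.eval y (MvPolynomial.map (algebraMap ℚ ℝ) g) = 0 := by
    intro y hyK hyC
    by_contra hgy
    have hyS : y ∈ S := ⟨hKV hyK, hgy⟩
    have hT : IsPreconnected (closure C ∩ S) :=
      hCpre.subset_closure (fun z hz => ⟨subset_closure hz, hCS hz⟩) Set.inter_subset_left
    have hsub : closure C ∩ S ⊆ C := by
      have h2 := hT.subset_connectedComponentIn ⟨subset_closure hx₀C, hx₀⟩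
        Set.inter_subset_right
      rwa [← hC] at h2
    exact hyC (hsub ⟨hyK, hyS⟩)
  have hKne : (closure C).Nonempty := ⟨x₀, subset_closure hx₀C⟩
  have key : ∃ xstar ∈ C,
      MvPolynomial.eval xstar (MvPolynomial.map (algebraMap ℚ ℝ) g) ≠ 0 ∧
      ((∀ y ∈ C, MvPolynomial.eval y (MvPolynomial.map (algebraMap ℚ ℝ) g) ≤
          MvPolynomial.eval xstar (MvPolynomial.map (algebraMap ℚ ℝ) g)) ∨
        (∀ y ∈ C, MvPolynomial.eval xstar (MvPolynomial.map (algebraMap ℚ ℝ) g) ≤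
          MvPolynomial.eval y (MvPolynomial.map (algebraMap ℚ ℝ) g))) ∧
      IsExtrOn (fun x => MvPolynomial.eval x (MvPolynomial.map (algebraMap ℚ ℝ) g))
        (closure C) xstar := by
    rcases hx₀.2.lt_or_gt with hneg | hpos
    · obtain ⟨z, hzK, hzmin⟩ := hKcomp.exists_isMinOn hKne hgc.continuousOn
      have hz0 : MvPolynomial.eval z (MvPolynomial.map (algebraMap ℚ ℝ) g) < 0 :=
        lt_of_le_of_lt (isMinOn_iff.mp hzmin x₀ (subset_closure hx₀C)) hneg
      have hzC : z ∈ C := by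
        by_contra h'
        rw [hbd z hzK h'] at hz0; exact lt_irrefl 0 hz0
      exact ⟨z, hzC, ne_of_lt hz0,
        Or.inr (fun y hy => isMinOn_iff.mp hzmin y (subset_closure hy)), Or.inl hzmin⟩
    · obtain ⟨z, hzK, hzmax⟩ := hKcomp.exists_isMaxOn hKne hgc.continuousOn
      have hz0 : 0 < MvPolynomial.eval z (MvPolynomial.map (algebraMap ℚ ℝ) g) :=
        lt_of_lt_of_le hpos (isMaxOn_iff.mp hzmax x₀ (subset_closure hx₀C))
      have hzC : z ∈ C := by
        by_contra h'
        rw [hbd z hzK h'] at hz0; exact lt_irrefl 0 hz0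
      exact ⟨z, hzC, (ne_of_lt hz0).symm,
        Or.inl (fun y hy => isMaxOn_iff.mp hzmax y (subset_closure hy)), Or.inr hzmax⟩
  obtain ⟨xstar, hstarC, hgne, hdisj, hextOn⟩ := key
  refine ⟨xstar, hstarC, hgne, hdisj, ?_⟩
  have hstarV : ∀ j, MvPolynomial.eval xstar (MvPolynomial.map (algebraMap ℚ ℝ) (f j)) = 0 :=
    (hCS hstarC).1
  -- the real Jacobian has rank s
  have hrankA : (Matrix.of fun (j : Fin s) (i : Fin n) =>
      MvPolynomial.eval xstar
        (MvPolynomial.map (algebraMap ℚ ℝ) (MvPolynomial.pderiv i (f j)))).rank = s := by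
    apply rank_real_of_rank_complex
    have h := hreg (fun i => (xstar i : ℂ)) (fun j => by
      rw [eval_compat]; exact_mod_cast congrArg Complex.ofReal (hstarV j))
    have hmeq : ((Matrix.of fun (j : Fin s) (i : Fin n) =>
        MvPolynomial.eval xstar
          (MvPolynomial.map (algebraMap ℚ ℝ) (MvPolynomial.pderiv i (f j)))).map
            (algebraMap ℝ ℂ))
        = Matrix.of fun (j : Fin s) (i : Fin n) =>
            MvPolynomial.eval (fun i => ((xstar i : ℝ) : ℂ))
              (MvPolynomial.map (algebraMap ℚ ℂ) (MvPolynomial.pderiv i (f j))) := by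
      ext j i
      simp only [Matrix.map_apply, Matrix.of_apply]
      rw [eval_compat]
      rfl
    rw [hmeq]
    exact h
  -- derivative data
  have hf' : ∀ j, HasStrictFDerivAt
      (fun x => MvPolynomial.eval x (MvPolynomial.map (algebraMap ℚ ℝ) (f j)))
      (∑ i : Fin n, (MvPolynomial.eval xstar
          (MvPolynomial.map (algebraMap ℚ ℝ) (MvPolynomial.pderiv i (f j)))) •
        (ContinuousLinearMap.proj i : (Fin n → ℝ) →L[ℝ] ℝ)) xstar := by
    intro j
    have h := mv_hasStrictFDerivAt (MvPolynomial.map (algebraMap ℚ ℝ) (f j)) xstar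
    simp only [pderiv_map] at h
    exact h
  set D : Fin s → (Fin n → ℝ) →L[ℝ] ℝ := fun j =>
    ∑ i : Fin n, (MvPolynomial.eval xstar
        (MvPolynomial.map (algebraMap ℚ ℝ) (MvPolynomial.pderiv i (f j)))) •
      (ContinuousLinearMap.proj i : (Fin n → ℝ) →L[ℝ] ℝ) with hDdef
  have hF : HasStrictFDerivAt
      (fun x (j : Fin s) => MvPolynomial.eval x (MvPolynomial.map (algebraMap ℚ ℝ) (f j)))
      (ContinuousLinearMap.pi D) xstar := hasStrictFDerivAt_pi.2 hf'
  -- surjectivity of the derivative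
  have hsurjA : Function.Surjective ((Matrix.of fun (j : Fin s) (i : Fin n) =>
      MvPolynomial.eval xstar
        (MvPolynomial.map (algebraMap ℚ ℝ) (MvPolynomial.pderiv i (f j)))).mulVecLin) := by
    rw [← LinearMap.range_eq_top]
    apply Submodule.eq_top_of_finrank_eq
    rw [show Module.finrank ℝ
        (LinearMap.range (Matrix.of fun (j : Fin s) (i : Fin n) =>
          MvPolynomial.eval xstar
            (MvPolynomial.map (algebraMap ℚ ℝ) (MvPolynomial.pderiv i (f j)))).mulVecLin)
        = (Matrix.of fun (j : Fin s) (i : Fin n) =>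
          MvPolynomial.eval xstar
            (MvPolynomial.map (algebraMap ℚ ℝ) (MvPolynomial.pderiv i (f j)))).rank from rfl,
      hrankA]
    simp
  have hsurj : LinearMap.range (ContinuousLinearMap.pi D : (Fin n → ℝ) →ₗ[ℝ] (Fin s → ℝ)) = ⊤ := by
    rw [LinearMap.range_eq_top]
    intro y
    obtain ⟨v, hv⟩ := hsurjA y
    refine ⟨v, ?_⟩
    funext j
    have := congrFun hv j
    simp only [Matrix.mulVecLin_apply, Matrix.mulVec, dotProduct, Matrix.of_apply] at this
    rw [← this]
    simp [hDdef, ContinuousLinearMap.pi_apply, ContinuousLinearMap.sum_apply,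
      ContinuousLinearMap.smul_apply, ContinuousLinearMap.proj_apply, smul_eq_mul]
  -- local connectedness of the level set near xstar
  have hFstar : (fun j : Fin s =>
      MvPolynomial.eval xstar (MvPolynomial.map (algebraMap ℚ ℝ) (f j))) = 0 :=
    funext fun j => hstarV j
  have hWopen : IsOpen {x : Fin n → ℝ |
      MvPolynomial.eval x (MvPolynomial.map (algebraMap ℚ ℝ) g) ≠ 0} :=
    isOpen_ne_fun hgc continuous_const
  obtain ⟨U, hUopen, hxU, hUW, hUconn⟩ :=
    local_connected_level_set hF hsurj hFstar hWopen hgne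
  have hlevel : {x : Fin n → ℝ | (fun j : Fin s =>
      MvPolynomial.eval x (MvPolynomial.map (algebraMap ℚ ℝ) (f j))) = 0} = Vr := by
    ext x; simp [hVrdef, _root_.funext_iff]
  have hVU : Vr ∩ U ⊆ C := by
    have hTS : Vr ∩ U ⊆ S := fun z hz => ⟨hz.1, hUW hz.2⟩
    have hxstarT : xstar ∈ Vr ∩ U := ⟨hstarV, hxU⟩
    have hconn : IsPreconnected (Vr ∩ U) := by rw [← hlevel]; exact hUconn
    have hCeq : C = connectedComponentIn S xstar := by
      rw [hC]
      exact connectedComponentIn_eq (hC ▸ hstarC)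
    rw [hCeq]
    exact hconn.subset_connectedComponentIn hxstarT hTS
  -- extrema transfer to local extremum on the level set
  have hloc : IsLocalExtrOn
      (fun x => MvPolynomial.eval x (MvPolynomial.map (algebraMap ℚ ℝ) g))
      {x | ∀ j, MvPolynomial.eval x (MvPolynomial.map (algebraMap ℚ ℝ) (f j)) =
        MvPolynomial.eval xstar (MvPolynomial.map (algebraMap ℚ ℝ) (f j))} xstar := by
    have hset : {x | ∀ j, MvPolynomial.eval x (MvPolynomial.map (algebraMap ℚ ℝ) (f j)) =
        MvPolynomial.eval xstar (MvPolynomial.map (algebraMap ℚ ℝ) (f j))} = Vr := by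
      ext x
      constructor
      · intro hx j; rw [hx j, hstarV j]
      · intro hx j; rw [hx j, hstarV j]
    have hle : nhdsWithin xstar Vr ≤ Filter.principal (closure C) := by
      rw [Filter.le_principal_iff]
      have hmem : Vr ∩ U ∈ nhdsWithin xstar Vr :=
        Filter.inter_mem self_mem_nhdsWithin
          (mem_nhdsWithin_of_mem_nhds (hUopen.mem_nhds hxU))
      exact Filter.mem_of_superset hmem (hVU.trans subset_closure)
    show IsExtrFilter _ (nhdsWithin xstar _) xstar
    rw [hset]
    exact IsExtrFilter.filter_mono hextOn hle
  exact rank_from_extremum f g xstar hrankA hloc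
end

section
/- Let f ∈ ℚ[x]^s and g ∈ ℚ[x] satisfy: V(f) is smooth of codimension s, V(f) ∩ ℝⁿ is bounded, and g has finitely many critical points on V(f). Let L ⊂ ℚ[x,λ] be the Lagrange system and J = ⟨L⟩. Then g(x) ≥ 0 for all x ∈ V(f) ∩ ℝⁿ if and only if g(x,λ) ≥ 0 for all (x,λ) ∈ V(L) ∩ ℝ^{n+s}. -/
open Finset Matrix MvPolynomial

lemma hasStrictFDerivAt_mvpoly_eval {n : ℕ} (p : MvPolynomial (Fin n) ℝ) (x : Fin n → ℝ) :
    HasStrictFDerivAt (fun y : Fin n → ℝ => eval y p)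
      (∑ i, eval x (pderiv i p) • (ContinuousLinearMap.proj i : (Fin n → ℝ) →L[ℝ] ℝ)) x := by
  induction p using MvPolynomial.induction_on with
  | C a =>
      simpa using (hasStrictFDerivAt_const (eval x (C a : MvPolynomial (Fin n) ℝ)) x)
  | add p q hp hq =>
      have := hp.add hq
      simp only [_root_.map_add] at *
      refine this.congr_fderiv ?_
      rw [← Finset.sum_add_distrib]
      congr 1; ext i; rw [add_smul]
  | mul_X p i hp =>
      have hXi : HasStrictFDerivAt (fun y : Fin n → ℝ => y i)
          (ContinuousLinearMap.proj i : (Fin n → ℝ) →L[ℝ] ℝ) x :=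
        (ContinuousLinearMap.proj i : (Fin n → ℝ) →L[ℝ] ℝ).hasStrictFDerivAt
      have h2 := hp.mul hXi
      simp only [_root_.map_mul, eval_X] at h2 ⊢
      refine h2.congr_fderiv (Eq.symm ?_)
      have hL : ∀ k : Fin n, eval x (pderiv k (p * X i)) =
          eval x (pderiv k p) * x i + eval x p * (if k = i then 1 else 0) := by
        intro k
        rw [pderiv_mul, pderiv_X]
        rcases eq_or_ne k i with h | h <;>
          simp [h, Pi.single_apply]
      ext v
      simp only [ContinuousLinearMap.sum_apply, ContinuousLinearMap.smul_apply,
        ContinuousLinearMap.add_apply, ContinuousLinearMap.proj_apply, smul_eq_mul, hL]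
      rw [Finset.sum_congr rfl fun k _ => add_mul _ _ (v k), Finset.sum_add_distrib,
        Finset.mul_sum, add_comm]
      congr 1
      · rw [Finset.sum_eq_single i] <;> simp +contextual
      · rw [Finset.sum_congr rfl fun k _ => ?_]
        ring

lemma eval_complexify {n : ℕ} (p : MvPolynomial (Fin n) ℚ) (x : Fin n → ℝ) :
    eval (fun i => (x i : ℂ)) (map (algebraMap ℚ ℂ) p)
      = ((eval x (map (algebraMap ℚ ℝ) p) : ℝ) : ℂ) := by
  rw [eval_map, eval_map]
  calc eval₂ (algebraMap ℚ ℂ) (fun i => (x i : ℂ)) p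
      = eval₂ (Complex.ofRealHom.comp (algebraMap ℚ ℝ)) (Complex.ofRealHom ∘ x) p := by
        congr 1
    _ = Complex.ofRealHom (eval₂ (algebraMap ℚ ℝ) x p) := (eval₂_comp_left _ _ _ _).symm

lemma vec_eq_zero_of_rank_rows {s n : ℕ} (A : Matrix (Fin s) (Fin n) ℂ) (hA : A.rank = s)
    (c : Fin s → ℂ) (hc : ∀ i, ∑ j, c j * A j i = 0) : c = 0 := by
  have h1 : Aᵀ.rank = s := by rw [Matrix.rank_transpose]; exact hA
  have hker : LinearMap.ker Aᵀ.mulVecLin = ⊥ := by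
    have h2 := LinearMap.finrank_range_add_finrank_ker Aᵀ.mulVecLin
    rw [Module.finrank_pi, Fintype.card_fin] at h2
    have h3 : Aᵀ.rank = Module.finrank ℂ (LinearMap.range Aᵀ.mulVecLin) := rfl
    rw [h3] at h1
    have : Module.finrank ℂ (LinearMap.ker Aᵀ.mulVecLin) = 0 := by omega
    exact Submodule.finrank_eq_zero.mp this
  have : Aᵀ.mulVecLin c = 0 := by
    funext i
    simp only [Matrix.mulVecLin_apply, Matrix.mulVec, dotProduct, Matrix.transpose_apply,
      Pi.zero_apply]
    rw [← hc i]
    exact Finset.sum_congr rfl fun j _ => mul_comm _ _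
  simpa using (LinearMap.ker_eq_bot.mp hker) (by simpa using this)

/-- Non-negativity on the real variety is equivalent to non-negativity on the real points
of the Lagrange system: if `V(f)` is smooth of codimension `s`, `V(f) ∩ ℝⁿ` is bounded and
`g` has finitely many critical points on `V(f)`, then `g ≥ 0` on `V(f) ∩ ℝⁿ` iff `g ≥ 0`
on `V(L) ∩ ℝ^{n+s}`, where `L` is the Lagrange system of `f` and `g`. -/
theorem nonneg_on_variety_iff_nonneg_on_lagrange
    (n s : ℕ) (hs : s ≤ n)
    (f : Fin s → MvPolynomial (Fin n) ℚ) (g : MvPolynomial (Fin n) ℚ)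
    -- smoothness: the Jacobian has full rank s at every complex point of V(f)
    (hreg : ∀ x : Fin n → ℂ,
      (∀ j, MvPolynomial.eval x (MvPolynomial.map (algebraMap ℚ ℂ) (f j)) = 0) →
      (Matrix.of fun (j : Fin s) (i : Fin n) =>
        MvPolynomial.eval x
          (MvPolynomial.map (algebraMap ℚ ℂ) (MvPolynomial.pderiv i (f j)))).rank = s)
    -- the real variety is bounded
    (hbdd : Bornology.IsBounded
      {x : Fin n → ℝ | ∀ j, MvPolynomial.eval x (MvPolynomial.map (algebraMap ℚ ℝ) (f j)) = 0})
    -- finitely many critical points of g on V(f)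
    (hfin : {x : Fin n → ℂ |
      (∀ j, MvPolynomial.eval x (MvPolynomial.map (algebraMap ℚ ℂ) (f j)) = 0) ∧
      (Matrix.fromRows
        (Matrix.of fun (j : Fin s) (i : Fin n) =>
          MvPolynomial.eval x
            (MvPolynomial.map (algebraMap ℚ ℂ) (MvPolynomial.pderiv i (f j))))
        (Matrix.of fun (_ : Unit) (i : Fin n) =>
          MvPolynomial.eval x
            (MvPolynomial.map (algebraMap ℚ ℂ) (MvPolynomial.pderiv i g)))).rank = s}.Finite) :
    (∀ x : Fin n → ℝ,
        (∀ j, MvPolynomial.eval x (MvPolynomial.map (algebraMap ℚ ℝ) (f j)) = 0) →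
        0 ≤ MvPolynomial.eval x (MvPolynomial.map (algebraMap ℚ ℝ) g)) ↔
    (∀ (x : Fin n → ℝ) (lam : Fin s → ℝ),
        ((∀ j, MvPolynomial.eval x (MvPolynomial.map (algebraMap ℚ ℝ) (f j)) = 0) ∧
          (∀ i : Fin n,
            MvPolynomial.eval x (MvPolynomial.map (algebraMap ℚ ℝ) (MvPolynomial.pderiv i g)) +
              ∑ j, lam j * MvPolynomial.eval x
                (MvPolynomial.map (algebraMap ℚ ℝ) (MvPolynomial.pderiv i (f j))) = 0)) →
        0 ≤ MvPolynomial.eval x (MvPolynomial.map (algebraMap ℚ ℝ) g)) := by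

  constructor
  · rintro h x lam ⟨hfx, -⟩
    exact h x hfx
  · intro h x hx
    by_contra hneg
    push_neg at hneg
    -- the real variety
    set K : Set (Fin n → ℝ) :=
      {y | ∀ j, MvPolynomial.eval y (MvPolynomial.map (algebraMap ℚ ℝ) (f j)) = 0} with hK
    have hKclosed : IsClosed K := by
      have : K = ⋂ j, (fun y : Fin n → ℝ =>
          MvPolynomial.eval y (MvPolynomial.map (algebraMap ℚ ℝ) (f j))) ⁻¹' {0} := by
        ext y; simp [hK]
      rw [this]
      exact isClosed_iInter fun j =>
        (isClosed_singleton.preimage (MvPolynomial.continuous_eval _))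
    have hKcompact : IsCompact K := Metric.isCompact_of_isClosed_isBounded hKclosed hbdd
    have hKne : K.Nonempty := ⟨x, hx⟩
    -- minimize g on K
    obtain ⟨z, hzK, hzmin⟩ := hKcompact.exists_isMinOn hKne
      ((MvPolynomial.continuous_eval (map (algebraMap ℚ ℝ) g)).continuousOn)
    have hgz : MvPolynomial.eval z (MvPolynomial.map (algebraMap ℚ ℝ) g) < 0 :=
      lt_of_le_of_lt (hzmin hx) hneg
    -- Lagrange multipliers at z
    have hextr : IsLocalExtrOn (fun y => MvPolynomial.eval y (MvPolynomial.map (algebraMap ℚ ℝ) g))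
        {y | ∀ j, MvPolynomial.eval y (MvPolynomial.map (algebraMap ℚ ℝ) (f j)) =
          MvPolynomial.eval z (MvPolynomial.map (algebraMap ℚ ℝ) (f j))} z := by
      have hset : {y | ∀ j, MvPolynomial.eval y (MvPolynomial.map (algebraMap ℚ ℝ) (f j)) =
          MvPolynomial.eval z (MvPolynomial.map (algebraMap ℚ ℝ) (f j))} = K := by
        ext y
        simp only [Set.mem_setOf_eq, hK]
        exact forall_congr' fun j => by rw [hzK j]
      rw [hset]
      exact Or.inl (hzmin.filter_mono inf_le_right)
    obtain ⟨Λ, Λ₀, hΛne, hΛsum⟩ := hextr.exists_multipliers_of_hasStrictFDerivAt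
      (f' := fun j => ∑ i, MvPolynomial.eval z
        (MvPolynomial.pderiv i (MvPolynomial.map (algebraMap ℚ ℝ) (f j))) •
        (ContinuousLinearMap.proj i : (Fin n → ℝ) →L[ℝ] ℝ))
      (fun j => hasStrictFDerivAt_mvpoly_eval _ z)
      (hasStrictFDerivAt_mvpoly_eval (MvPolynomial.map (algebraMap ℚ ℝ) g) z)
    -- coordinate form of the multiplier identity
    have hcoord : ∀ i : Fin n,
        (∑ j, Λ j * MvPolynomial.eval z
          (MvPolynomial.map (algebraMap ℚ ℝ) (MvPolynomial.pderiv i (f j)))) +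
        Λ₀ * MvPolynomial.eval z (MvPolynomial.map (algebraMap ℚ ℝ) (MvPolynomial.pderiv i g))
          = 0 := by
      intro i
      have := congrFun (congrArg (DFunLike.coe) hΛsum) (Pi.single i 1)
      simp only [ContinuousLinearMap.add_apply, ContinuousLinearMap.sum_apply,
        ContinuousLinearMap.smul_apply, ContinuousLinearMap.proj_apply, smul_eq_mul,
        ContinuousLinearMap.zero_apply, Pi.single_apply] at this
      rw [← this]
      congr 1
      · refine Finset.sum_congr rfl fun j _ => ?_
        rw [Finset.sum_eq_single i] <;>
          simp +contextual [MvPolynomial.pderiv_map, eq_comm]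
      · rw [Finset.sum_eq_single i] <;>
          simp +contextual [MvPolynomial.pderiv_map, eq_comm]
    -- Λ₀ cannot be zero, by the full-rank hypothesis
    have hΛ₀ : Λ₀ ≠ 0 := by
      intro h0
      subst h0
      have hzC : ∀ j, MvPolynomial.eval (fun i => ((z i : ℝ) : ℂ))
          (MvPolynomial.map (algebraMap ℚ ℂ) (f j)) = 0 := by
        intro j
        rw [eval_complexify]
        exact_mod_cast congrArg (Complex.ofReal) (hzK j)
      have hrank := hreg (fun i => ((z i : ℝ) : ℂ)) hzC
      have hΛ0 : (fun j => ((Λ j : ℝ) : ℂ)) = 0 := by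
        refine vec_eq_zero_of_rank_rows _ hrank _ fun i => ?_
        have hi := hcoord i
        simp only [zero_mul, add_zero] at hi
        have : ((∑ j, Λ j * MvPolynomial.eval z
            (MvPolynomial.map (algebraMap ℚ ℝ) (MvPolynomial.pderiv i (f j))) : ℝ) : ℂ) = 0 := by
          rw [hi]; simp
        rw [← this]
        push_cast
        refine Finset.sum_congr rfl fun j _ => ?_
        rw [Matrix.of_apply, eval_complexify]
      have : Λ = 0 := by
        funext j
        have h' := congrFun hΛ0 j
        simpa using h'
      exact hΛne (by simp [this])
    -- build the Lagrange multipliers and contradict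
    have := h z (fun j => Λ j / Λ₀) ⟨hzK, fun i => ?_⟩
    · exact absurd this (not_le.mpr hgz)
    · have hi := hcoord i
      have hsum' : (∑ j, Λ j / Λ₀ * MvPolynomial.eval z
          (MvPolynomial.map (algebraMap ℚ ℝ) (MvPolynomial.pderiv i (f j))))
          = (∑ j, Λ j * MvPolynomial.eval z
          (MvPolynomial.map (algebraMap ℚ ℝ) (MvPolynomial.pderiv i (f j)))) / Λ₀ := by
        rw [Finset.sum_div]
        exact Finset.sum_congr rfl fun j _ => div_mul_eq_mul_div _ _ _
      have hS : (∑ j, Λ j * MvPolynomial.eval z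
          (MvPolynomial.map (algebraMap ℚ ℝ) (MvPolynomial.pderiv i (f j))))
          = -(Λ₀ * MvPolynomial.eval z
            (MvPolynomial.map (algebraMap ℚ ℝ) (MvPolynomial.pderiv i g))) := by
        linarith [hi]
      rw [hsum', hS, neg_div, mul_div_cancel_left₀ _ hΛ₀]
      ring
end
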